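/- If H is a Hilbert space, Y a Banach space, and T : H → Y a bounded linear operator, then the Weyl numbers coincide with the approximation numbers: x_n(T) = a_n(T) for all n ∈ ℕ. -/

import Mathlib

noncomputable section

open scoped ENNReal

/-- The `n`-th approximation number. -/
def approxNumber {X Y : Type*} [NormedAddCommGroup X] [NormedSpace ℝ X]
    [NormedAddCommGroup Y] [NormedSpace ℝ Y] (n : ℕ) (T : X →L[ℝ] Y) : ℝ :=
  sInf {c : ℝ | ∃ A : X →L[ℝ] Y, FiniteDimensional ℝ (LinearMap.range (A : X →ₗ[ℝ] Y)) ∧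
    Module.finrank ℝ (LinearMap.range (A : X →ₗ[ℝ] Y)) < n ∧ ‖T - A‖ = c}

/-- The Hilbert sequence space `ℓ₂`. -/
abbrev Ell2 : Type := lp (fun _ : ℕ => ℝ) 2

/-- The `n`-th Weyl number. -/
def weylNumber {X Y : Type*} [NormedAddCommGroup X] [NormedSpace ℝ X]
    [NormedAddCommGroup Y] [NormedSpace ℝ Y] (n : ℕ) (T : X →L[ℝ] Y) : ℝ :=
  ⨆ A : {A : Ell2 →L[ℝ] X // ‖A‖ ≤ 1}, approxNumber n (T.comp A.1)



open Module Submodule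
open scoped RealInnerProductSpace

section helpers
variable {X Y Z : Type*} [NormedAddCommGroup X] [NormedSpace ℝ X]
  [NormedAddCommGroup Y] [NormedSpace ℝ Y] [NormedAddCommGroup Z] [NormedSpace ℝ Z]

def approxSet (n : ℕ) (T : X →L[ℝ] Y) : Set ℝ :=
  {c : ℝ | ∃ A : X →L[ℝ] Y, FiniteDimensional ℝ (LinearMap.range (A : X →ₗ[ℝ] Y)) ∧
    Module.finrank ℝ (LinearMap.range (A : X →ₗ[ℝ] Y)) < n ∧ ‖T - A‖ = c}

lemma approxNumber_eq (n : ℕ) (T : X →L[ℝ] Y) : approxNumber n T = sInf (approxSet n T) := rfl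

lemma bddBelow_approxSet (n : ℕ) (T : X →L[ℝ] Y) : BddBelow (approxSet n T) := by
  refine ⟨0, fun c hc => ?_⟩
  obtain ⟨A, _, _, rfl⟩ := hc
  exact norm_nonneg _

lemma approxNumber_nonneg (n : ℕ) (T : X →L[ℝ] Y) : 0 ≤ approxNumber n T := by
  refine Real.sInf_nonneg fun c hc => ?_
  obtain ⟨A, _, _, rfl⟩ := hc
  exact norm_nonneg _

lemma zero_mem_range_finrank (n : ℕ) (hn : 0 < n) (T : X →L[ℝ] Y) :
    ‖T‖ ∈ approxSet n T := by
  have h0 : LinearMap.range ((0 : X →L[ℝ] Y) : X →ₗ[ℝ] Y) = ⊥ := by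
    ext y
    simp only [LinearMap.mem_range, Submodule.mem_bot]
    constructor
    · rintro ⟨x, rfl⟩; rfl
    · rintro rfl; exact ⟨0, rfl⟩
  refine ⟨0, ?_, ?_, by simp⟩
  · rw [h0]; infer_instance
  · rw [h0, finrank_bot]; exact hn

lemma approxSet_nonempty {n : ℕ} (hn : 0 < n) (T : X →L[ℝ] Y) :
    (approxSet n T).Nonempty := ⟨‖T‖, zero_mem_range_finrank n hn T⟩

lemma approxNumber_le {n : ℕ} (T B : X →L[ℝ] Y) [FiniteDimensional ℝ (LinearMap.range (B : X →ₗ[ℝ] Y))]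
    (h : Module.finrank ℝ (LinearMap.range (B : X →ₗ[ℝ] Y)) < n) : approxNumber n T ≤ ‖T - B‖ :=
  csInf_le (bddBelow_approxSet n T) ⟨B, ‹_›, h, rfl⟩

lemma approxNumber_zero (T : X →L[ℝ] Y) : approxNumber 0 T = 0 := by
  have : approxSet 0 T = ∅ := by
    ext c; simp only [approxSet, Set.mem_setOf_eq, Set.mem_empty_iff_false, iff_false]
    rintro ⟨A, _, h, _⟩; exact Nat.not_lt_zero _ h
  rw [approxNumber_eq, this, Real.sInf_empty]

lemma approxNumber_le_opNorm {n : ℕ} (hn : 0 < n) (T : X →L[ℝ] Y) :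
    approxNumber n T ≤ ‖T‖ :=
  csInf_le (bddBelow_approxSet n T) (zero_mem_range_finrank n hn T)

lemma approxNumber_comp_le (n : ℕ) (T : X →L[ℝ] Y) (C : Z →L[ℝ] X) (hC : ‖C‖ ≤ 1) :
    approxNumber n (T.comp C) ≤ approxNumber n T := by
  rcases Nat.eq_zero_or_pos n with rfl | hn
  · rw [approxNumber_zero, approxNumber_zero]
  refine le_csInf (approxSet_nonempty hn T) ?_
  rintro c ⟨B, hB, hBn, rfl⟩
  have hle : LinearMap.range ((B.comp C : Z →L[ℝ] Y) : Z →ₗ[ℝ] Y) ≤ LinearMap.range (B : X →ₗ[ℝ] Y) := by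
    rintro y ⟨x, rfl⟩
    exact ⟨C x, rfl⟩
  haveI : FiniteDimensional ℝ (LinearMap.range ((B.comp C : Z →L[ℝ] Y) : Z →ₗ[ℝ] Y)) :=
    Submodule.finiteDimensional_of_le hle
  have hrk : Module.finrank ℝ (LinearMap.range ((B.comp C : Z →L[ℝ] Y) : Z →ₗ[ℝ] Y)) < n :=
    lt_of_le_of_lt (Submodule.finrank_mono hle) hBn
  refine le_trans (approxNumber_le (T.comp C) (B.comp C) hrk) ?_
  rw [← ContinuousLinearMap.sub_comp]
  calc ‖(T - B).comp C‖ ≤ ‖T - B‖ * ‖C‖ := ContinuousLinearMap.opNorm_comp_le _ _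
    _ ≤ ‖T - B‖ * 1 := by
        exact mul_le_mul_of_nonneg_left hC (norm_nonneg _)
    _ = ‖T - B‖ := mul_one _

end helpers


section construction
variable {H : Type*} [NormedAddCommGroup H] [InnerProductSpace ℝ H]

def e2 (i : ℕ) : Ell2 := lp.single 2 i (1 : ℝ)

lemma e2_coord (i : ℕ) (x : Ell2) : ⟪e2 i, x⟫ = x i := by
  rw [e2, lp.inner_single_left]
  simp [RCLike.inner_apply]

lemma orthonormal_e2 : Orthonormal ℝ e2 := by
  rw [orthonormal_iff_ite]
  intro i j
  rw [e2_coord]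
  by_cases h : i = j
  · subst h; simp [e2, lp.single_apply]
  · simp [e2, lp.single_apply, h, Ne.symm h]

lemma normbound {E F : Type*} [NormedAddCommGroup E] [InnerProductSpace ℝ E]
    [NormedAddCommGroup F] [InnerProductSpace ℝ F] {m : ℕ}
    (u : Fin m → E) (w : Fin m → F) (hu : Orthonormal ℝ u) (hw : Orthonormal ℝ w)
    (x : E) : ‖∑ i : Fin m, ⟪u i, x⟫ • w i‖ ≤ ‖x‖ := by
  have h1 : ‖∑ i : Fin m, ⟪u i, x⟫ • w i‖ ^ 2 = ∑ i : Fin m, ⟪u i, x⟫ ^ 2 := by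
    rw [← real_inner_self_eq_norm_sq]
    rw [hw.inner_sum (fun i => ⟪u i, x⟫) (fun i => ⟪u i, x⟫) Finset.univ]
    simp [sq]
  have h2 : ∑ i : Fin m, ⟪u i, x⟫ ^ 2 ≤ ‖x‖ ^ 2 := by
    have := hu.sum_inner_products_le (s := Finset.univ) x
    simpa [Real.norm_eq_abs, sq_abs] using this
  have h3 : ‖∑ i : Fin m, ⟪u i, x⟫ • w i‖ ^ 2 ≤ ‖x‖ ^ 2 := h1 ▸ h2
  exact (pow_le_pow_iff_left₀ (norm_nonneg _) (norm_nonneg _) two_ne_zero).mp h3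

lemma exists_ell2_factor (M : Submodule ℝ H) [FiniteDimensional ℝ M] :
    ∃ A : Ell2 →L[ℝ] H, ‖A‖ ≤ 1 ∧ ∃ C : M →L[ℝ] Ell2, ‖C‖ ≤ 1 ∧
      ∀ x : M, A (C x) = (x : H) := by
  classical
  set m := finrank ℝ M with hm
  set b : OrthonormalBasis (Fin m) ℝ M := stdOrthonormalBasis ℝ M with hbdef
  set bH : Fin m → H := fun i => (b i : H) with hbH
  have hbON : Orthonormal ℝ bH := by
    rw [orthonormal_iff_ite]
    intro i j
    have := orthonormal_iff_ite.mp b.orthonormal i j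
    rwa [Submodule.coe_inner] at this
  set e' : Fin m → Ell2 := fun i => e2 (i : ℕ) with he'
  have heON : Orthonormal ℝ e' := orthonormal_e2.comp _ Fin.val_injective
  set A : Ell2 →L[ℝ] H := ∑ i : Fin m, (innerSL ℝ (e' i)).smulRight (bH i) with hA
  set C : M →L[ℝ] Ell2 :=
    ∑ i : Fin m, ((innerSL ℝ (bH i)).comp M.subtypeL).smulRight (e' i) with hC
  have hAapp : ∀ x : Ell2, A x = ∑ i : Fin m, ⟪e' i, x⟫ • bH i := by
    intro x; rw [hA]; simp [ContinuousLinearMap.sum_apply]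
  have hCapp : ∀ x : M, C x = ∑ i : Fin m, ⟪bH i, (x : H)⟫ • e' i := by
    intro x; rw [hC]; simp [ContinuousLinearMap.sum_apply]
  refine ⟨A, ?_, C, ?_, ?_⟩
  · refine A.opNorm_le_bound zero_le_one fun x => ?_
    rw [one_mul, hAapp]
    exact normbound e' bH heON hbON x
  · refine C.opNorm_le_bound zero_le_one fun x => ?_
    rw [one_mul, hCapp]
    calc ‖∑ i : Fin m, ⟪bH i, (x : H)⟫ • e' i‖ ≤ ‖(x : H)‖ := normbound bH e' hbON heON _
      _ = ‖x‖ := rfl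
  · intro x
    rw [hCapp, hAapp]
    have hcoeff : ∀ j : Fin m, ⟪e' j, ∑ i : Fin m, ⟪bH i, (x : H)⟫ • e' i⟫
        = ⟪bH j, (x : H)⟫ := heON.inner_right_fintype _
    calc (∑ j : Fin m, ⟪e' j, ∑ i : Fin m, ⟪bH i, (x : H)⟫ • e' i⟫ • bH j)
        = ∑ j : Fin m, ⟪bH j, (x : H)⟫ • bH j := by
          refine Finset.sum_congr rfl fun j _ => by rw [hcoeff]
      _ = ((∑ j : Fin m, ⟪b j, x⟫ • b j : M) : H) := by
          rw [Submodule.coe_sum]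
          refine Finset.sum_congr rfl fun j _ => ?_
          rw [Submodule.coe_smul, Submodule.coe_inner]
      _ = (x : H) := by
          congr 1
          have : ∀ j, ⟪b j, x⟫ = b.repr x j := fun j => (b.repr_apply_apply x j).symm
          simp_rw [this]
          exact b.sum_repr x
end construction

-- sub-lemma: suborthonormal family controlling the kernel of a finite-rank operator
lemma exists_suborthonormal {M Y : Type*} [NormedAddCommGroup M] [InnerProductSpace ℝ M]
    [FiniteDimensional ℝ M] [NormedAddCommGroup Y] [NormedSpace ℝ Y]
    (B : M →L[ℝ] Y) (k : ℕ) (hk : finrank ℝ (LinearMap.range (B : M →ₗ[ℝ] Y)) ≤ k) :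
    ∃ v : Fin k → M, (∀ i j, i ≠ j → ⟪v i, v j⟫ = 0) ∧ (∀ i, ‖v i‖ = 1 ∨ v i = 0) ∧
      ∀ x : M, (∀ i, ⟪v i, x⟫ = 0) → B x = 0 := by
  classical
  set K : Submodule ℝ M := LinearMap.ker (B : M →ₗ[ℝ] Y) with hK
  set G : Submodule ℝ M := Kᗮ with hG
  have hrank : finrank ℝ G ≤ k := by
    have h1 : finrank ℝ K + finrank ℝ G = finrank ℝ M :=
      Submodule.finrank_add_finrank_orthogonal K
    have h2 : finrank ℝ (LinearMap.range (B : M →ₗ[ℝ] Y)) + finrank ℝ K = finrank ℝ M := by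
      have := LinearMap.finrank_range_add_finrank_ker (B : M →ₗ[ℝ] Y)
      simpa using this
    omega
  set r := finrank ℝ G with hr
  set bG : OrthonormalBasis (Fin r) ℝ G := stdOrthonormalBasis ℝ G with hbG
  set v : Fin k → M := fun i => if h : (i : ℕ) < r then ((bG ⟨i, h⟩ : G) : M) else 0 with hv
  have hinner : ∀ (p q : Fin r), ⟪((bG p : G) : M), ((bG q : G) : M)⟫ =
      if p = q then (1 : ℝ) else 0 := by
    intro p q
    have := orthonormal_iff_ite.mp bG.orthonormal p q
    rwa [Submodule.coe_inner] at this
  refine ⟨v, ?_, ?_, ?_⟩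
  · intro i j hij
    rw [hv]
    by_cases hi : (i : ℕ) < r
    · by_cases hj : (j : ℕ) < r
      · simp only [dif_pos hi, dif_pos hj]
        rw [hinner]
        have : (⟨(i : ℕ), hi⟩ : Fin r) ≠ ⟨(j : ℕ), hj⟩ := by
          simp only [ne_eq, Fin.mk.injEq]
          exact fun h => hij (Fin.ext h)
        simp [this]
      · simp [dif_pos hi, dif_neg hj]
    · simp [dif_neg hi]
  · intro i
    rw [hv]
    by_cases hi : (i : ℕ) < r
    · left
      simp only [dif_pos hi]
      have := hinner ⟨(i : ℕ), hi⟩ ⟨(i : ℕ), hi⟩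
      rw [if_pos rfl] at this
      have hnorm : ‖((bG ⟨(i : ℕ), hi⟩ : G) : M)‖ ^ 2 = 1 := by
        rw [← real_inner_self_eq_norm_sq, this]
      nlinarith [norm_nonneg ((bG ⟨(i : ℕ), hi⟩ : G) : M)]
    · right; simp [dif_neg hi]
  · intro x hx
    have hbx : ∀ p : Fin r, ⟪((bG p : G) : M), x⟫ = 0 := by
      intro p
      have hlt : (p : ℕ) < k := lt_of_lt_of_le p.2 hrank
      have h0 := hx ⟨(p : ℕ), hlt⟩
      simp only [hv, dif_pos (show ((⟨(p : ℕ), hlt⟩ : Fin k) : ℕ) < r from p.2)] at h0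
      simpa using h0
    have hxG : x ∈ Gᗮ := by
      rw [Submodule.mem_orthogonal]
      intro u hu
      lift u to G using hu with u'
      rw [← bG.sum_repr u']
      rw [Submodule.coe_sum]
      rw [sum_inner]
      refine Finset.sum_eq_zero fun p _ => ?_
      rw [Submodule.coe_smul, inner_smul_left]
      simp [hbx p]
    have hxK : x ∈ K := by
      rwa [hG, Submodule.orthogonal_orthogonal] at hxG
    exact hxK
section hard
variable {H Y : Type*} [NormedAddCommGroup H] [InnerProductSpace ℝ H] [CompleteSpace H]
  [NormedAddCommGroup Y] [NormedSpace ℝ Y]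

set_option maxHeartbeats 2000000 in
lemma exists_findim_approx (T : H →L[ℝ] Y) {n : ℕ} (hn : 0 < n) {ε : ℝ} (hε : 0 < ε) :
    ∃ M : Submodule ℝ H, FiniteDimensional ℝ M ∧
      approxNumber n T - ε ≤ approxNumber n (T.comp M.subtypeL) := by
  classical
  by_contra hcon
  push_neg at hcon
  set c := approxNumber n T with hc
  set δ := c - ε with hδdef
  have hδpos : 0 < δ := lt_of_le_of_lt (approxNumber_nonneg _ _) (hcon ⊥ inferInstance)
  set k' := n - 1 with hk'
  have hk'n : k' < n := Nat.sub_lt hn one_pos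
  -- Step A: per finset, a suborthonormal family controlling T
  have step : ∀ S : Finset H, ∃ v : Fin k' → H,
      (∀ i, v i ∈ span ℝ (S : Set H)) ∧
      (∀ i j, i ≠ j → ⟪v i, v j⟫ = 0) ∧
      (∀ i, ‖v i‖ = 1 ∨ v i = 0) ∧
      (∀ x : span ℝ (S : Set H), (∀ i, ⟪v i, (x : H)⟫ = 0) → ‖T (x : H)‖ ≤ δ * ‖x‖) := by
    intro S
    set M := span ℝ (S : Set H) with hM
    have hlt : sInf (approxSet n (T.comp M.subtypeL)) < δ := hcon M inferInstance
    obtain ⟨c', hc'mem, hc'lt⟩ := exists_lt_of_csInf_lt (approxSet_nonempty hn _) hlt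
    obtain ⟨B, hBfin, hBrk, rfl⟩ := hc'mem
    haveI := hBfin
    have hBrk' : finrank ℝ (LinearMap.range (B : M →ₗ[ℝ] Y)) ≤ k' := by omega
    obtain ⟨w, hw1, hw2, hw3⟩ := exists_suborthonormal B k' hBrk'
    refine ⟨fun i => ((w i : M) : H), fun i => (w i).2, ?_, ?_, ?_⟩
    · intro i j hij
      have := hw1 i j hij
      rwa [Submodule.coe_inner] at this
    · intro i
      rcases hw2 i with h | h
      · left; exact h
      · right
        show ((w i : M) : H) = 0
        rw [h]; rfl
    · intro x hx
      have hx' : ∀ i, ⟪w i, x⟫ = 0 := by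
        intro i
        rw [Submodule.coe_inner]
        simpa using hx i
      have hBx : B x = 0 := hw3 x hx'
      have h1 : T (x : H) = (T.comp M.subtypeL - B) x := by
        simp [hBx]
      rw [h1]
      calc ‖(T.comp M.subtypeL - B) x‖ ≤ ‖T.comp M.subtypeL - B‖ * ‖x‖ :=
            (T.comp M.subtypeL - B).le_opNorm x
        _ ≤ δ * ‖x‖ := mul_le_mul_of_nonneg_right hc'lt.le (norm_nonneg x)
  choose vfam hv1 hv2 hv3 hv4 using step
  have hval : ∀ (i : Fin k') (S : Finset H), ‖vfam S i‖ ≤ 1 := by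
    intro i S; rcases hv3 S i with h | h
    · rw [h]
    · simp [h]
  -- Step B: ultrafilter and weak limits
  haveI : Filter.NeBot (Filter.atTop : Filter (Finset H)) := Filter.atTop_neBot
  obtain ⟨𝒰, h𝒰⟩ := Ultrafilter.exists_le (Filter.atTop : Filter (Finset H))
  have key : ∀ i : Fin k', ∃ v : H, ‖v‖ ≤ 1 ∧
      ∀ y : H, Filter.Tendsto (fun S => ⟪vfam S i, y⟫) 𝒰 (nhds ⟪v, y⟫) := by
    intro i
    set g : Finset H → WeakDual ℝ H :=
      fun S => StrongDual.toWeakDual (InnerProductSpace.toDual ℝ H (vfam S i)) with hg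
    have hK := WeakDual.isCompact_closedBall (𝕜 := ℝ) (E := H) 0 1
    have hmem : ∀ S, g S ∈
        WeakDual.toStrongDual ⁻¹' Metric.closedBall (0 : StrongDual ℝ H) 1 := by
      intro S
      simp only [Set.mem_preimage, Metric.mem_closedBall, dist_zero_right]
      have : ‖InnerProductSpace.toDual ℝ H (vfam S i)‖ = ‖vfam S i‖ :=
        (InnerProductSpace.toDual ℝ H).norm_map _
      calc ‖WeakDual.toStrongDual (g S)‖ = ‖InnerProductSpace.toDual ℝ H (vfam S i)‖ := rfl
        _ ≤ 1 := this ▸ hval i S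
    have hle : ↑(𝒰.map g) ≤ Filter.principal
        (WeakDual.toStrongDual ⁻¹' Metric.closedBall (0 : StrongDual ℝ H) 1) := by
      rw [Filter.le_principal_iff]
      exact Filter.mem_map.mpr (Filter.mem_of_superset Filter.univ_mem fun S _ => hmem S)
    obtain ⟨φ, hφmem, hφle⟩ := hK.ultrafilter_le_nhds (𝒰.map g) hle
    refine ⟨(InnerProductSpace.toDual ℝ H).symm (WeakDual.toStrongDual φ), ?_, ?_⟩
    · rw [LinearIsometryEquiv.norm_map]
      simpa [dist_zero_right] using hφmem
    · intro y
      have htd : Filter.Tendsto g 𝒰 (nhds φ) := by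
        rwa [Ultrafilter.coe_map] at hφle
      have hev : Filter.Tendsto (fun ψ : WeakDual ℝ H => ψ y) (nhds φ) (nhds (φ y)) :=
        (WeakDual.eval_continuous y).tendsto φ
      have := hev.comp htd
      have happ : ∀ S, g S y = ⟪vfam S i, y⟫ := fun S => InnerProductSpace.toDual_apply_apply
      have hlim : ⟪(InnerProductSpace.toDual ℝ H).symm (WeakDual.toStrongDual φ), y⟫ = φ y :=
        InnerProductSpace.toDual_symm_apply
      rw [hlim]
      exact this.congr happ
  choose vlim hvlim1 hvlim2 using key
  -- Step C: the limiting subspace and the key estimate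
  set F := span ℝ (Set.range vlim) with hF
  haveI : FiniteDimensional ℝ F := FiniteDimensional.span_of_finite ℝ (Set.finite_range vlim)
  have hFrk : finrank ℝ F ≤ k' := by
    have h := finrank_range_le_card (R := ℝ) vlim
    rw [Set.finrank] at h
    simpa using h
  have claim : ∀ y : H, (∀ i, ⟪vlim i, y⟫ = 0) → ‖T y‖ ≤ δ * ‖y‖ := by
    intro y hy
    refine le_of_forall_pos_le_add fun η hη => ?_
    set θ := η / (‖T‖ * k' + 1) with hθ
    have hθpos : 0 < θ := div_pos hη (by positivity)
    have hmem1 : {S : Finset H | y ∈ span ℝ (S : Set H)} ∈ 𝒰 := by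
      refine h𝒰 (Filter.mem_of_superset (Filter.mem_atTop ({y} : Finset H)) ?_)
      intro S hS
      exact Submodule.subset_span (hS (Finset.mem_singleton_self y))
    have hmem2 : ∀ i : Fin k', {S : Finset H | |⟪vfam S i, y⟫| < θ} ∈ 𝒰 := by
      intro i
      have htd := hvlim2 i y
      rw [hy i] at htd
      have := Metric.tendsto_nhds.mp htd θ hθpos
      have h' : ∀ᶠ S in (𝒰 : Filter (Finset H)), |⟪vfam S i, y⟫| < θ := by
        simpa [Real.dist_eq] using this
      exact h'
    have hbig : ({S : Finset H | y ∈ span ℝ (S : Set H)} ∩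
        ⋂ i : Fin k', {S : Finset H | |⟪vfam S i, y⟫| < θ}) ∈ 𝒰 :=
      Filter.inter_mem hmem1 ((Filter.iInter_mem).mpr hmem2)
    obtain ⟨S, hS⟩ := Filter.nonempty_of_mem hbig
    obtain ⟨hSy, hSi'⟩ := hS
    have hSi : ∀ i, |⟪vfam S i, y⟫| < θ := by
      intro i
      exact Set.mem_iInter.mp hSi' i
    set a : Fin k' → ℝ := fun i => ⟪vfam S i, y⟫ with ha
    set z := y - ∑ i, a i • vfam S i with hz
    have hzmem : z ∈ span ℝ ((S : Finset H) : Set H) :=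
      Submodule.sub_mem _ hSy
        (Submodule.sum_mem _ fun i _ => Submodule.smul_mem _ _ (hv1 S i))
    have hzorth : ∀ j, ⟪vfam S j, z⟫ = 0 := by
      intro j
      rcases hv3 S j with h1 | h1
      · have hsum : ⟪vfam S j, ∑ i, a i • vfam S i⟫ = a j := by
          rw [inner_sum]
          rw [Finset.sum_eq_single j]
          · rw [inner_smul_right, real_inner_self_eq_norm_sq, h1]; ring
          · intro i _ hij
            rw [inner_smul_right, hv2 S j i (Ne.symm hij), mul_zero]
          · intro h; exact absurd (Finset.mem_univ j) h
        rw [hz, inner_sub_right, hsum]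
        simp [ha]
      · simp [h1]
    have hTz : ‖T z‖ ≤ δ * ‖z‖ := by
      have := hv4 S ⟨z, hzmem⟩ (fun i => hzorth i)
      simpa using this
    have hzy : ‖z‖ ≤ ‖y‖ := by
      have horth : ⟪z, ∑ i, a i • vfam S i⟫ = 0 := by
        rw [inner_sum]
        refine Finset.sum_eq_zero fun i _ => ?_
        rw [inner_smul_right, real_inner_comm, hzorth i, mul_zero]
      have hyid : y = z + ∑ i, a i • vfam S i := by rw [hz]; abel
      have hsq : ‖y‖ ^ 2 = ‖z‖ ^ 2 + ‖∑ i, a i • vfam S i‖ ^ 2 := by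
        conv_lhs => rw [hyid]
        rw [norm_add_sq_real, horth]; ring
      nlinarith [norm_nonneg z, norm_nonneg y, norm_nonneg (∑ i, a i • vfam S i)]
    have hsum : ‖∑ i, a i • vfam S i‖ ≤ k' * θ := by
      calc ‖∑ i, a i • vfam S i‖ ≤ ∑ i, ‖a i • vfam S i‖ := norm_sum_le _ _
        _ ≤ ∑ _i : Fin k', θ := by
            refine Finset.sum_le_sum fun i _ => ?_
            rw [norm_smul]
            calc ‖a i‖ * ‖vfam S i‖ ≤ θ * 1 := by
                  refine mul_le_mul (le_of_lt ?_) (hval i S) (norm_nonneg _) hθpos.le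
                  simpa [Real.norm_eq_abs] using hSi i
              _ = θ := mul_one θ
        _ = k' * θ := by simp [Finset.sum_const, nsmul_eq_mul]
    have hyid : y = z + ∑ i, a i • vfam S i := by rw [hz]; abel
    calc ‖T y‖ = ‖T z + T (∑ i, a i • vfam S i)‖ := by rw [← map_add, ← hyid]
      _ ≤ ‖T z‖ + ‖T (∑ i, a i • vfam S i)‖ := norm_add_le _ _
      _ ≤ δ * ‖z‖ + ‖T‖ * (k' * θ) := by
          refine add_le_add hTz ?_
          calc ‖T (∑ i, a i • vfam S i)‖ ≤ ‖T‖ * ‖∑ i, a i • vfam S i‖ := T.le_opNorm _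
            _ ≤ ‖T‖ * (k' * θ) := mul_le_mul_of_nonneg_left hsum (norm_nonneg T)
      _ ≤ δ * ‖y‖ + ‖T‖ * (k' * θ) := by
          have := mul_le_mul_of_nonneg_left hzy hδpos.le
          linarith
      _ ≤ δ * ‖y‖ + η := by
          have hTk : ‖T‖ * (k' * θ) ≤ η := by
            rw [hθ]
            rw [div_eq_mul_inv]
            have hpos : (0:ℝ) < ‖T‖ * k' + 1 := by positivity
            rw [← mul_assoc, ← mul_assoc]
            calc ‖T‖ * ↑k' * η * (‖T‖ * ↑k' + 1)⁻¹ ≤ (‖T‖ * ↑k' + 1) * η * (‖T‖ * ↑k' + 1)⁻¹ := by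
                  have h1 : ‖T‖ * (k':ℝ) ≤ ‖T‖ * k' + 1 := by linarith
                  have := mul_le_mul_of_nonneg_right (mul_le_mul_of_nonneg_right h1 hη.le)
                    (inv_nonneg.mpr hpos.le)
                  linarith [this]
              _ = η := by field_simp
          linarith
  -- Step D: conclude with a rank < n approximation, contradiction
  set Binf : H →L[ℝ] Y := T.comp (F.subtypeL.comp (orthogonalProjection F)) with hBinf
  have hrange : LinearMap.range (Binf : H →ₗ[ℝ] Y) ≤ F.map (T : H →ₗ[ℝ] Y) := by
    rintro yy ⟨x, rfl⟩
    exact ⟨(orthogonalProjection F x : H), (orthogonalProjection F x).2, rfl⟩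
  haveI : FiniteDimensional ℝ (LinearMap.range (Binf : H →ₗ[ℝ] Y)) := Submodule.finiteDimensional_of_le hrange
  have hrk : finrank ℝ (LinearMap.range (Binf : H →ₗ[ℝ] Y)) < n := by
    refine lt_of_le_of_lt (le_trans (Submodule.finrank_mono hrange) ?_) hk'n
    exact le_trans (Submodule.finrank_map_le _ _) hFrk
  have hnorm : ‖T - Binf‖ ≤ δ := by
    refine ContinuousLinearMap.opNorm_le_bound _ hδpos.le fun x => ?_
    have hxF : x - ↑(orthogonalProjection F x) ∈ Fᗮ :=
      F.sub_starProjection_mem_orthogonal x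
    have hinner0 : ∀ i, ⟪vlim i, x - ↑(orthogonalProjection F x)⟫ = 0 := fun i =>
      (Submodule.mem_orthogonal F _).mp hxF (vlim i) (Submodule.subset_span ⟨i, rfl⟩)
    have h1 : (T - Binf) x = T (x - ↑(orthogonalProjection F x)) := by
      simp [hBinf, map_sub]
    rw [h1]
    have hproj : ‖x - ↑(orthogonalProjection F x)‖ ≤ ‖x‖ := by
      have horth : ⟪(orthogonalProjection F x : H), x - ↑(orthogonalProjection F x)⟫ = 0 := by
        have := hxF
        rw [Submodule.mem_orthogonal] at this
        exact this _ (orthogonalProjection F x).2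
      have hid : x = ↑(orthogonalProjection F x) + (x - ↑(orthogonalProjection F x)) := by abel
      have hsq : ‖x‖ ^ 2 = ‖(orthogonalProjection F x : H)‖ ^ 2
          + ‖x - ↑(orthogonalProjection F x)‖ ^ 2 := by
        conv_lhs => rw [hid]
        rw [norm_add_sq_real, horth]; ring
      nlinarith [norm_nonneg (x - (orthogonalProjection F x : H)), norm_nonneg x,
        norm_nonneg ((orthogonalProjection F x : H))]
    calc ‖T (x - ↑(orthogonalProjection F x))‖ ≤ δ * ‖x - ↑(orthogonalProjection F x)‖ :=
          claim _ hinner0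
      _ ≤ δ * ‖x‖ := mul_le_mul_of_nonneg_left hproj hδpos.le
  have hfinal : c ≤ δ := le_trans (approxNumber_le T Binf hrk) hnorm
  rw [hδdef] at hfinal
  linarith

end hard

/-- If `H` is a Hilbert space and `Y` a Banach space, then for `T : H → Y`
the Weyl and approximation numbers coincide: `x_n(T) = a_n(T)` for all `n`. -/
theorem weyl_eq_approx_of_hilbert
    {H Y : Type*} [NormedAddCommGroup H] [InnerProductSpace ℝ H] [CompleteSpace H]
    [NormedAddCommGroup Y] [NormedSpace ℝ Y] [CompleteSpace Y]
    (T : H →L[ℝ] Y) (n : ℕ) :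
    weylNumber n T = approxNumber n T := by
  haveI : Nonempty {A : Ell2 →L[ℝ] H // ‖A‖ ≤ 1} := ⟨⟨0, by simp⟩⟩
  have hbound : ∀ A : {A : Ell2 →L[ℝ] H // ‖A‖ ≤ 1},
      approxNumber n (T.comp A.1) ≤ ‖T‖ := by
    intro A
    rcases Nat.eq_zero_or_pos n with rfl | hn
    · rw [approxNumber_zero]; exact norm_nonneg T
    · refine le_trans (approxNumber_le_opNorm hn _) ?_
      calc ‖T.comp A.1‖ ≤ ‖T‖ * ‖A.1‖ := ContinuousLinearMap.opNorm_comp_le _ _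
        _ ≤ ‖T‖ * 1 := mul_le_mul_of_nonneg_left A.2 (norm_nonneg T)
        _ = ‖T‖ := mul_one _
  have hbdd : BddAbove (Set.range fun A : {A : Ell2 →L[ℝ] H // ‖A‖ ≤ 1} =>
      approxNumber n (T.comp A.1)) := by
    refine ⟨‖T‖, ?_⟩
    rintro _ ⟨A, rfl⟩
    exact hbound A
  refine le_antisymm ?_ ?_
  · exact ciSup_le fun A => approxNumber_comp_le n T A.1 A.2
  · rcases Nat.eq_zero_or_pos n with rfl | hn
    · rw [approxNumber_zero]
      exact Real.iSup_nonneg fun A => approxNumber_nonneg _ _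
    · refine le_of_forall_pos_le_add fun ε hε => ?_
      obtain ⟨M, hMfin, hM⟩ := exists_findim_approx T hn hε
      haveI := hMfin
      obtain ⟨A, hA1, C, hC1, hAC⟩ := exists_ell2_factor M
      have hcomp : T.comp M.subtypeL = (T.comp A).comp C := by
        ext x
        simp [hAC x]
      have h2 : approxNumber n (T.comp M.subtypeL) ≤ approxNumber n (T.comp A) := by
        rw [hcomp]
        exact approxNumber_comp_le n (T.comp A) C hC1
      have h3 : approxNumber n (T.comp A) ≤ weylNumber n T :=
        le_ciSup hbdd ⟨A, hA1⟩
      linarith
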